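/- Every compact subset K of the open unit ball B_X(1) of the l¹-sum X of finite dimensional Banach spaces is contained in σ²·B_X(1) for some sequence σ = (σ_n) with 0 ≤ σ_n < 1 and σ_n → 0, where σ²·B_X(1) = {(σ_n² y_n) : y ∈ B_X(1)}. -/
import Mathlib

open Filter
open scoped ENNReal

section Aux

/-- Tail sum of a real sequence. -/
noncomputable def tailSum (f : ℕ → ℝ) (m : ℕ) : ℝ := ∑' k, f (k + m)

lemma tailSum_nonneg {f : ℕ → ℝ} (hf0 : ∀ n, 0 ≤ f n) (m : ℕ) : 0 ≤ tailSum f m :=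
  tsum_nonneg fun k => hf0 _

lemma tailSum_le {f : ℕ → ℝ} (hf0 : ∀ n, 0 ≤ f n) (hf : Summable f) (m : ℕ) :
    tailSum f m ≤ ∑' n, f n := by
  rw [← Summable.sum_add_tsum_nat_add m hf]
  exact le_add_of_nonneg_left (Finset.sum_nonneg fun i _ => hf0 i)

lemma tailSum_anti {f : ℕ → ℝ} (hf0 : ∀ n, 0 ≤ f n) (hf : Summable f) {m m' : ℕ} (h : m ≤ m') :
    tailSum f m' ≤ tailSum f m := by
  have hsm : Summable fun k => f (k + m) := (summable_nat_add_iff m).2 hf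
  have h2 := tailSum_le (f := fun k => f (k + m)) (fun n => hf0 _) hsm (m' - m)
  have h3 : tailSum (fun k => f (k + m)) (m' - m) = tailSum f m' := by
    unfold tailSum
    apply tsum_congr
    intro k
    show f (k + (m' - m) + m) = f (k + m')
    have hk : k + (m' - m) + m = k + m' := by omega
    rw [hk]
  rwa [h3] at h2

lemma sum_le_tailSum {f : ℕ → ℝ} (hf0 : ∀ n, 0 ≤ f n) (hf : Summable f) {m : ℕ} {s : Finset ℕ}
    (hs : ∀ n ∈ s, m ≤ n) : ∑ n ∈ s, f n ≤ tailSum f m := by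
  have hsm : Summable fun k => f (k + m) := (summable_nat_add_iff m).2 hf
  have key : ∑ k ∈ s.image (· - m), f (k + m) = ∑ n ∈ s, f n := by
    rw [Finset.sum_image]
    · exact Finset.sum_congr rfl fun n hn => by
        have := hs n hn
        congr 1
        omega
    · intro a ha b hb hab
      have h1 := hs a ha
      have h2 := hs b hb
      simp only at hab
      omega
  calc ∑ n ∈ s, f n = ∑ k ∈ s.image (· - m), f (k + m) := key.symm
    _ ≤ tailSum f m := Summable.sum_le_tsum _ (fun k _ => hf0 _) hsm

lemma tailSum_tendsto (f : ℕ → ℝ) : Tendsto (tailSum f) atTop (nhds 0) :=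
  tendsto_sum_nat_add f

/-- An auxiliary strictly increasing sequence dominating a given one. -/
def Nseq (m : ℕ → ℕ) : ℕ → ℕ
  | 0 => 0
  | j + 1 => max (Nseq m j + 1) (m (j + 1))

lemma Nseq_strictMono (m : ℕ → ℕ) : StrictMono (Nseq m) :=
  strictMono_nat_of_lt_succ fun j =>
    lt_of_lt_of_le (Nat.lt_succ_self _) (le_max_left _ _)

lemma Nseq_ge (m : ℕ → ℕ) (j : ℕ) : j ≤ Nseq m j :=
  (Nseq_strictMono m).le_apply

lemma Nseq_ge_m (m : ℕ → ℕ) (j : ℕ) : m (j + 1) ≤ Nseq m (j + 1) := le_max_right _ _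

end Aux

section lpAux

variable {E : ℕ → Type} [∀ n, NormedAddCommGroup (E n)]

lemma lp_one_summable (x : lp E 1) : Summable fun n => ‖x n‖ := by
  have := (lp.memℓp x).summable (p := 1) (by norm_num)
  simpa using this

lemma lp_one_norm_eq (x : lp E 1) : ‖x‖ = ∑' n, ‖x n‖ := by
  have := lp.norm_eq_tsum_rpow (p := 1) (by norm_num) x
  simpa using this

lemma lp_tail_lip (x y : lp E 1) (m : ℕ) :
    tailSum (fun n => ‖x n‖) m ≤ tailSum (fun n => ‖y n‖) m + ‖x - y‖ := by
  have hx := (summable_nat_add_iff m).2 (lp_one_summable x)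
  have hy := (summable_nat_add_iff m).2 (lp_one_summable y)
  have hd := (summable_nat_add_iff m).2 (lp_one_summable (x - y))
  have step : tailSum (fun n => ‖x n‖) m ≤ ∑' k, (‖y (k + m)‖ + ‖(x - y) (k + m)‖) := by
    apply Summable.tsum_le_tsum _ hx (hy.add hd)
    intro k
    have hsub : (x - y) (k + m) = x (k + m) - y (k + m) := by
      rw [lp.coeFn_sub]; rfl
    rw [hsub]
    have : x (k + m) = y (k + m) + (x (k + m) - y (k + m)) := by abel
    calc ‖x (k + m)‖ = ‖y (k + m) + (x (k + m) - y (k + m))‖ := by rw [← this]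
      _ ≤ ‖y (k + m)‖ + ‖x (k + m) - y (k + m)‖ := norm_add_le _ _
  rw [Summable.tsum_add hy hd] at step
  refine step.trans (add_le_add le_rfl ?_)
  calc (∑' k, ‖(x - y) (k + m)‖) ≤ ∑' n, ‖(x - y) n‖ :=
        tailSum_le (fun n => norm_nonneg _) (lp_one_summable (x - y)) m
    _ = ‖x - y‖ := (lp_one_norm_eq _).symm

end lpAux

/-- Every compact subset `K` of the open unit ball of the `l¹`-sum `X` of finite
dimensional Banach spaces is contained in `σ²·B_X(1)` for some sequence `σ` with `0 ≤ σ_n < 1`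
and `σ_n → 0`. -/
theorem compact_subset_sigmasq_ball (E : ℕ → Type) [∀ n, NormedAddCommGroup (E n)]
    [∀ n, NormedSpace ℂ (E n)] [∀ n, FiniteDimensional ℂ (E n)]
    (K : Set (lp E 1)) (hK : IsCompact K) (hKB : K ⊆ Metric.ball (0 : lp E 1) 1) :
    ∃ σ : ℕ → ℝ, (∀ n, 0 ≤ σ n ∧ σ n < 1) ∧ Tendsto σ atTop (nhds 0) ∧
      K ⊆ {x : lp E 1 | ∃ y : lp E 1, ‖y‖ < 1 ∧ ∀ n, x n = ((σ n) ^ 2 : ℝ) • y n} := by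
  classical
  rcases K.eq_empty_or_nonempty with hKe | hKne
  · exact ⟨fun _ => 0, fun n => ⟨le_refl 0, by norm_num⟩, tendsto_const_nhds, by simp [hKe]⟩
  -- notation: tail functional
  set T : lp E 1 → ℕ → ℝ := fun x m => tailSum (fun n => ‖x n‖) m with hT
  have hTnonneg : ∀ (x : lp E 1) m, 0 ≤ T x m := fun x m =>
    tailSum_nonneg (fun n => norm_nonneg _) m
  have hTanti : ∀ (x : lp E 1) {m m'}, m ≤ m' → T x m' ≤ T x m := fun x _ _ h =>
    tailSum_anti (fun n => norm_nonneg _) (lp_one_summable x) h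
  have hTzero : ∀ x : lp E 1, T x 0 = ‖x‖ := by
    intro x
    rw [lp_one_norm_eq x]
    simp [hT, tailSum]
  have hTtendsto : ∀ x : lp E 1, Tendsto (T x) atTop (nhds 0) := fun x =>
    tailSum_tendsto _
  -- uniform tail smallness on K
  have huniform : ∀ ε : ℝ, 0 < ε → ∃ m, ∀ x ∈ K, T x m ≤ ε := by
    intro ε hε
    have hcov : K ⊆ ⋃ z ∈ K, Metric.ball z (ε / 2) := fun x hx =>
      Set.mem_biUnion hx (Metric.mem_ball_self (by linarith))
    obtain ⟨t, htK, htfin, htcov⟩ :=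
      hK.elim_finite_subcover_image (fun z _ => Metric.isOpen_ball) hcov
    -- choose tail indices for centers
    have hex : ∀ z : lp E 1, ∃ mz, T z mz ≤ ε / 2 := by
      intro z
      obtain ⟨mz, hmz⟩ := ((hTtendsto z).eventually_lt_const (by linarith : (0:ℝ) < ε/2)).exists
      exact ⟨mz, le_of_lt hmz⟩
    choose mz hmz using hex
    obtain ⟨m0, hm0⟩ : ∃ m0, ∀ z ∈ t, mz z ≤ m0 := by
      obtain ⟨m0, hm0⟩ := (htfin.image mz).bddAbove
      exact ⟨m0, fun z hz => hm0 (Set.mem_image_of_mem mz hz)⟩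
    refine ⟨m0, fun x hx => ?_⟩
    obtain ⟨z, hzt, hxz⟩ : ∃ z ∈ t, x ∈ Metric.ball z (ε / 2) := by
      have := htcov hx
      simpa using this
    have h1 : T x m0 ≤ T z m0 + ‖x - z‖ := lp_tail_lip x z m0
    have h2 : T z m0 ≤ T z (mz z) := hTanti z (hm0 z hzt)
    have h3 : ‖x - z‖ < ε / 2 := by
      rw [← dist_eq_norm]
      exact hxz
    have := hmz z
    linarith
  -- maximum of the norm on K
  obtain ⟨x₀, hx₀K, hx₀max⟩ := hK.exists_isMaxOn hKne continuous_norm.continuousOn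
  set r : ℝ := ‖x₀‖ with hr
  have hr0 : 0 ≤ r := norm_nonneg _
  have hr1 : r < 1 := by
    have := hKB hx₀K
    rwa [Metric.mem_ball, dist_zero_right] at this
  set δ : ℝ := (1 - r) / 2 with hδ
  have hδ0 : 0 < δ := by simp only [hδ]; linarith
  set L : ℝ := (1 + 2 / (1 + r)) / 2 with hL
  have hr1' : (0:ℝ) < 1 + r := by linarith
  have hL1 : 1 < L := by
    have : 1 < 2 / (1 + r) := by
      rw [lt_div_iff₀ hr1']
      linarith
    simp only [hL]; linarith
  have hL0 : 0 < L := by linarith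
  have hB1 : L * r + L * δ < 1 := by
    have h1 : L * r + L * δ = L * ((1 + r) / 2) := by simp only [hδ]; ring
    have h2 : L < 2 / (1 + r) := by
      have : 1 < 2 / (1 + r) := by
        rw [lt_div_iff₀ hr1']; linarith
      simp only [hL]; linarith
    rw [h1]
    calc L * ((1 + r) / 2) < 2 / (1 + r) * ((1 + r) / 2) := by
          apply mul_lt_mul_of_pos_right h2; linarith
      _ = 1 := by field_simp
  -- choose block boundaries
  have hmex : ∀ j : ℕ, ∃ mj : ℕ, ∀ x ∈ K, T x mj ≤ δ * (1 / 4 : ℝ) ^ j := fun j =>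
    huniform _ (by positivity)
  choose m hm using hmex
  set N : ℕ → ℕ := Nseq m with hNdef
  have hN0 : N 0 = 0 := rfl
  have hNmono : StrictMono N := Nseq_strictMono m
  have hNge : ∀ j, j ≤ N j := Nseq_ge m
  have hNbound : ∀ j : ℕ, ∀ x ∈ K, T x (N (j + 1)) ≤ δ * (1 / 4 : ℝ) ^ (j + 1) := by
    intro j x hx
    exact le_trans (hTanti x (Nseq_ge_m m j)) (hm (j + 1) x hx)
  -- block index function
  set J : ℕ → ℕ := fun n => Nat.findGreatest (fun j => N j ≤ n) n with hJdef
  have hJ1 : ∀ n, N (J n) ≤ n := fun n =>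
    Nat.findGreatest_spec (P := fun j => N j ≤ n) (m := 0) (Nat.zero_le n) (by simp [hN0])
  have hJ2 : ∀ j n, N j ≤ n → j ≤ J n := fun j n h =>
    Nat.le_findGreatest (P := fun j => N j ≤ n) (le_trans (hNge j) h) h
  have hJ3 : ∀ n, J n ≤ n := fun n => Nat.findGreatest_le n
  -- the weights
  set w : ℕ → ℝ := fun n => L * 2 ^ (J n) with hw
  have hw1 : ∀ n, 1 < w n := by
    intro n
    have h2 : (1:ℝ) ≤ 2 ^ (J n) := one_le_pow₀ (by norm_num : (1:ℝ) ≤ 2)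
    calc (1:ℝ) < L := hL1
      _ = L * 1 := (mul_one L).symm
      _ ≤ L * 2 ^ (J n) := by
        apply mul_le_mul_of_nonneg_left h2 (le_of_lt hL0)
  have hw0 : ∀ n, 0 < w n := fun n => lt_trans one_pos (hw1 n)
  set σ : ℕ → ℝ := fun n => Real.sqrt (w n)⁻¹ with hσ
  have hσsq : ∀ n, (σ n) ^ 2 = (w n)⁻¹ := fun n =>
    Real.sq_sqrt (inv_nonneg.2 (le_of_lt (hw0 n)))
  refine ⟨σ, fun n => ⟨Real.sqrt_nonneg _, ?_⟩, ?_, ?_⟩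
  · -- σ n < 1
    rw [show (1:ℝ) = Real.sqrt 1 from (Real.sqrt_one).symm]
    apply Real.sqrt_lt_sqrt (inv_nonneg.2 (le_of_lt (hw0 n)))
    rw [inv_lt_one_iff₀]
    right; exact hw1 n
  · -- σ → 0
    have hJtop : Tendsto J atTop atTop :=
      tendsto_atTop_atTop.2 fun b => ⟨N b, fun n hn => hJ2 b n hn⟩
    have h2top : Tendsto (fun j : ℕ => L * 2 ^ j) atTop atTop := by
      apply Tendsto.const_mul_atTop hL0
      exact tendsto_pow_atTop_atTop_of_one_lt (by norm_num)
    have hinv : Tendsto (fun j : ℕ => (L * 2 ^ j)⁻¹) atTop (nhds 0) :=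
      h2top.inv_tendsto_atTop
    have hsqrt : Tendsto (fun j : ℕ => Real.sqrt (L * 2 ^ j)⁻¹) atTop (nhds 0) := by
      have := (Real.continuous_sqrt.tendsto' 0 0 Real.sqrt_zero).comp hinv
      exact this
    exact hsqrt.comp hJtop
  · -- main inclusion
    intro x hx
    set g : ℕ → ℝ := fun n => w n * ‖x n‖ with hg
    have hg0 : ∀ n, 0 ≤ g n := fun n =>
      mul_nonneg (le_of_lt (hw0 n)) (norm_nonneg _)
    -- partial sum bound
    have hpartial : ∀ M : ℕ, ∑ n ∈ Finset.range M, g n ≤ L * r + L * δ := by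
      intro M
      have hmaps : ∀ n ∈ Finset.range M, J n ∈ Finset.range M := fun n hn =>
        Finset.mem_range.2 (lt_of_le_of_lt (hJ3 n) (Finset.mem_range.1 hn))
      rw [← Finset.sum_fiberwise_of_maps_to hmaps g]
      have hfiber : ∀ j, (∑ n ∈ (Finset.range M).filter (fun n => J n = j), g n) ≤
          L * 2 ^ j * T x (N j) := by
        intro j
        have heq : (∑ n ∈ (Finset.range M).filter (fun n => J n = j), g n) =
            L * 2 ^ j * ∑ n ∈ (Finset.range M).filter (fun n => J n = j), ‖x n‖ := by
          rw [Finset.mul_sum]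
          apply Finset.sum_congr rfl
          intro n hn
          have hn' : J n = j := (Finset.mem_filter.1 hn).2
          simp [hg, hw, hn']
        rw [heq]
        apply mul_le_mul_of_nonneg_left _ (by positivity)
        apply sum_le_tailSum (fun n => norm_nonneg _) (lp_one_summable x)
        intro n hn
        have hn' : J n = j := (Finset.mem_filter.1 hn).2
        rw [← hn']
        exact hJ1 n
      calc (∑ j ∈ Finset.range M, ∑ n ∈ (Finset.range M).filter (fun n => J n = j), g n)
          ≤ ∑ j ∈ Finset.range M, L * 2 ^ j * T x (N j) :=
            Finset.sum_le_sum fun j _ => hfiber j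
        _ ≤ L * r + L * δ := by
            cases M with
            | zero => simp; positivity
            | succ M' =>
              rw [Finset.sum_range_succ']
              have h0 : L * 2 ^ 0 * T x (N 0) ≤ L * r := by
                rw [hN0, hTzero x]
                simp only [pow_zero, mul_one]
                exact mul_le_mul_of_nonneg_left (hx₀max hx) (le_of_lt hL0)
              have h1 : (∑ j ∈ Finset.range M', L * 2 ^ (j + 1) * T x (N (j + 1)))
                  ≤ L * δ := by
                calc (∑ j ∈ Finset.range M', L * 2 ^ (j + 1) * T x (N (j + 1)))
                    ≤ ∑ j ∈ Finset.range M', L * 2 ^ (j + 1) * (δ * (1/4 : ℝ) ^ (j + 1)) := by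
                      apply Finset.sum_le_sum
                      intro j _
                      exact mul_le_mul_of_nonneg_left (hNbound j x hx) (by positivity)
                  _ = L * δ * ∑ j ∈ Finset.range M', (1/2 : ℝ) ^ (j + 1) := by
                      rw [Finset.mul_sum]
                      apply Finset.sum_congr rfl
                      intro j _
                      rw [show ((1:ℝ)/2) = 2 * (1/4) by norm_num, mul_pow]
                      ring
                  _ ≤ L * δ * 1 := by
                      apply mul_le_mul_of_nonneg_left _ (by positivity)
                      have : (∑ j ∈ Finset.range M', (1/2 : ℝ) ^ (j + 1)) =
                          (1/2) * ∑ j ∈ Finset.range M', (1/2 : ℝ) ^ j := by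
                        rw [Finset.mul_sum]
                        apply Finset.sum_congr rfl
                        intro j _
                        ring
                      rw [this]
                      have h2 := sum_geometric_two_le M'
                      linarith
                  _ = L * δ := mul_one _
              linarith
    have hgsum : Summable g := summable_of_sum_range_le hg0 hpartial
    have hgtsum : ∑' n, g n ≤ L * r + L * δ := Real.tsum_le_of_sum_range_le hg0 hpartial
    -- build y
    have hymem : Memℓp (fun n => (w n : ℝ) • x n) 1 := by
      apply memℓp_gen
      have : (fun n => ‖(w n : ℝ) • x n‖ ^ (1 : ℝ≥0∞).toReal) = g := by
        funext n
        simp [hg, norm_smul, abs_of_pos (hw0 n)]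
      rw [this]
      exact hgsum
    set y : lp E 1 := ⟨fun n => (w n : ℝ) • x n, hymem⟩ with hy
    have hyapp : ∀ n, y n = (w n : ℝ) • x n := fun n => rfl
    have hynorm : ‖y‖ < 1 := by
      rw [lp_one_norm_eq y]
      have : (fun n => ‖y n‖) = g := by
        funext n
        rw [hyapp n]
        simp [hg, norm_smul, abs_of_pos (hw0 n)]
      rw [this]
      exact lt_of_le_of_lt hgtsum hB1
    refine ⟨y, hynorm, fun n => ?_⟩
    rw [hyapp n, hσsq n, smul_smul, inv_mul_cancel₀ (ne_of_gt (hw0 n)), one_smul]
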